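/- arXiv:0811.1075 — 6 statements merged into one kernel-verified Lean document; each statement's English description precedes it below -/
import Mathlib

section
/- If there is a w-resolution derivation (resolution where from clauses C0, C1 and variable x one may infer (C0 \ {x}) ∪ (C1 \ {¬x}) without requiring x ∈ C0 or ¬x ∈ C1) of a clause C from a CNF F of size n, then there is an ordinary resolution derivation from F of some clause C' ⊆ C of size at most n. -/
open Classical

noncomputable section

abbrev Var := ℕ
abbrev Lit := Var × Bool

def Lit.neg (l : Lit) : Lit := (l.1, !l.2)
def posLit (x : Var) : Lit := (x, true)
def negLit (x : Var) : Lit := (x, false)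

abbrev Clause := Finset Lit
abbrev CNF := Set Clause
abbrev Assign := Var → Option Bool

def Assign.set (α : Assign) (x : Var) (b : Bool) : Assign :=
  fun y => if y = x then some b else α y

def emptyAssign : Assign := fun _ => none

/-- `α` assigns the value false to every literal of `C` (i.e. `C↾α = 0`). -/
def falsifies (α : Assign) (C : Clause) : Prop := ∀ l ∈ C, α l.1 = some (!l.2)

def satLit (α : Assign) (l : Lit) : Prop := α l.1 = some l.2

/-- `F↾α = 0`. -/
def CNFFalse (F : CNF) (α : Assign) : Prop := ∃ C ∈ F, falsifies α C

/-- `F↾α = 1`. -/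
def CNFTrue (F : CNF) (α : Assign) : Prop := ∀ C ∈ F, ∃ l ∈ C, satLit α l

def Unsat (F : CNF) : Prop := ¬ ∃ β : Var → Bool, ∀ C ∈ F, ∃ l ∈ C, β l.1 = l.2

/-- The (w-)resolvent of `C0` and `C1` on the variable `x`. -/
def Resolvent (C0 C1 : Clause) (x : Var) : Clause :=
  C0.erase (posLit x) ∪ C1.erase (negLit x)

/-- A resolution derivation, as a sequence of clauses. -/
def IsResDeriv (F : CNF) (L : List Clause) : Prop :=
  ∀ i (hi : i < L.length),
    L[i] ∈ F ∨ ∃ j k x, ∃ hj : j < L.length, ∃ hk : k < L.length, j < i ∧ k < i ∧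
      posLit x ∈ L[j] ∧ negLit x ∈ L[k] ∧ L[i] = Resolvent L[j] L[k] x

/-- A w-resolution derivation: no membership requirements on the resolved variable. -/
def IsWResDeriv (F : CNF) (L : List Clause) : Prop :=
  ∀ i (hi : i < L.length),
    L[i] ∈ F ∨ ∃ j k x, ∃ hj : j < L.length, ∃ hk : k < L.length, j < i ∧ k < i ∧
      L[i] = Resolvent L[j] L[k] x

/-- A derivation using resolution and the weakening rule. -/
def IsResWeakDeriv (F : CNF) (L : List Clause) : Prop :=
  ∀ i (hi : i < L.length),
    L[i] ∈ F ∨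
    (∃ j, ∃ hj : j < L.length, j < i ∧ L[j] ⊆ L[i]) ∨
    ∃ j k x, ∃ hj : j < L.length, ∃ hk : k < L.length, j < i ∧ k < i ∧
      posLit x ∈ L[j] ∧ negLit x ∈ L[k] ∧ L[i] = Resolvent L[j] L[k] x

/-- Ordered binary resolution trees (nodes carry their clause and resolution variable). -/
inductive RTree where
  | leaf (C : Clause)
  | node (C : Clause) (x : Var) (t0 t1 : RTree)

namespace RTree

def conc : RTree → Clause
  | leaf C => C
  | node C _ _ _ => C

def size : RTree → ℕ
  | leaf _ => 1
  | node _ _ t0 t1 => t0.size + t1.size + 1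

def resVars : RTree → Finset Var
  | leaf _ => ∅
  | node _ x t0 t1 => insert x (t0.resVars ∪ t1.resVars)

def allClauses : RTree → Set Clause
  | leaf C => {C}
  | node C _ t0 t1 => {C} ∪ t0.allClauses ∪ t1.allClauses

def derivedClauses : RTree → Set Clause
  | leaf _ => ∅
  | node C _ t0 t1 => {C} ∪ t0.derivedClauses ∪ t1.derivedClauses

def leafClauses : RTree → Set Clause
  | leaf C => {C}
  | node _ _ t0 t1 => t0.leafClauses ∪ t1.leafClauses

def isLeaf : RTree → Prop
  | leaf _ => True
  | node _ _ _ _ => False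

/-- Every internal node has at least one leaf child: input trees. -/
def inputShape : RTree → Prop
  | leaf _ => True
  | node _ _ t0 t1 => (t0.isLeaf ∨ t1.isLeaf) ∧ t0.inputShape ∧ t1.inputShape

/-- All inferences are proper (ordinary) resolution inferences. -/
def properRes : RTree → Prop
  | leaf _ => True
  | node C x t0 t1 => posLit x ∈ t0.conc ∧ negLit x ∈ t1.conc ∧
      C = Resolvent t0.conc t1.conc x ∧ t0.properRes ∧ t1.properRes

/-- The clauses of the input-derived nodes of a tree (subtrees that are input
resolution proofs). -/
def inputClauses : RTree → Set Clause
  | leaf C => {C}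
  | node C x t0 t1 =>
      (if (RTree.node C x t0 t1).inputShape ∧ (RTree.node C x t0 t1).properRes
        then ({C} : Set Clause) else ∅)
      ∪ t0.inputClauses ∪ t1.inputClauses

/-- Number of non-input-derived nodes. -/
def nonInputCount : RTree → ℕ
  | leaf _ => 0
  | node C x t0 t1 =>
      (if (RTree.node C x t0 t1).inputShape ∧ (RTree.node C x t0 t1).properRes
        then 0 else 1)
      + t0.nonInputCount + t1.nonInputCount

/-- Regularity: no variable is used twice as resolution variable on a path. -/
def regAux : RTree → Set Var → Prop
  | leaf _, _ => True
  | node _ x t0 t1, s => x ∉ s ∧ t0.regAux (insert x s) ∧ t1.regAux (insert x s)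

def regular (t : RTree) : Prop := t.regAux ∅

end RTree

/-- An ordinary resolution tree with all leaves labeled by clauses of `F`. -/
def IsResTreeFrom (F : CNF) : RTree → Prop
  | .leaf C => C ∈ F
  | .node C x t0 t1 => IsResTreeFrom F t0 ∧ IsResTreeFrom F t1 ∧
      posLit x ∈ t0.conc ∧ negLit x ∈ t1.conc ∧ C = Resolvent t0.conc t1.conc x

/-- Resolution tree with input lemmas; `avail` is the set of lemmas available
from earlier (in post-order) input-derived nodes. -/
def IsRTI (F : CNF) : RTree → Set Clause → Prop
  | .leaf C, avail => C ∈ F ∨ C ∈ avail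
  | .node C x t0 t1, avail => IsRTI F t0 avail ∧ IsRTI F t1 (avail ∪ t0.inputClauses) ∧
      posLit x ∈ t0.conc ∧ negLit x ∈ t1.conc ∧ C = Resolvent t0.conc t1.conc x

/-- w-resolution tree with input lemmas. -/
def IsWRTI (F : CNF) : RTree → Set Clause → Prop
  | .leaf C, avail => C ∈ F ∨ C ∈ avail
  | .node C x t0 t1, avail => IsWRTI F t0 avail ∧ IsWRTI F t1 (avail ∪ t0.inputClauses) ∧
      C = Resolvent t0.conc t1.conc x

/-- Resolution tree with (arbitrary earlier) lemmas. -/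
def IsRTL (F : CNF) : RTree → Set Clause → Prop
  | .leaf C, avail => C ∈ F ∨ C ∈ avail
  | .node C x t0 t1, avail => IsRTL F t0 avail ∧ IsRTL F t1 (avail ∪ t0.allClauses) ∧
      posLit x ∈ t0.conc ∧ negLit x ∈ t1.conc ∧ C = Resolvent t0.conc t1.conc x

/-- w-resolution tree with (arbitrary earlier) lemmas. -/
def IsWRTL (F : CNF) : RTree → Set Clause → Prop
  | .leaf C, avail => C ∈ F ∨ C ∈ avail
  | .node C x t0 t1, avail => IsWRTL F t0 avail ∧ IsWRTL F t1 (avail ∪ t0.allClauses) ∧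
      C = Resolvent t0.conc t1.conc x

/-- Resolution dags, presented in a topological order; node `n-1` is the conclusion. -/
structure RDag (F : CNF) where
  n : ℕ
  npos : 0 < n
  clause : Fin n → Clause
  pred : Fin n → Option (Fin n × Fin n × Var)
  topo : ∀ i p, pred i = some p → p.1 < i ∧ p.2.1 < i
  leaf_mem : ∀ i, pred i = none → clause i ∈ F
  res_ok : ∀ i j k x, pred i = some (j, k, x) →
    posLit x ∈ clause j ∧ negLit x ∈ clause k ∧ clause i = Resolvent (clause j) (clause k) x

namespace RDag

variable {F : CNF}

def root (R : RDag F) : Fin R.n := ⟨R.n - 1, Nat.sub_lt R.npos one_pos⟩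

def parent (R : RDag F) (j i : Fin R.n) : Prop :=
  ∃ p, R.pred i = some p ∧ (p.1 = j ∨ p.2.1 = j)

def resVar (R : RDag F) (i : Fin R.n) : Option Var := (R.pred i).map (fun p => p.2.2)

def regular (R : RDag F) : Prop :=
  ∀ i j x, Relation.TransGen R.parent j i → R.resVar i = some x → R.resVar j ≠ some x

/-- `PathLen R i m`: there is a path with `m` edges from some leaf of `R` to `i`. -/
inductive PathLen (R : RDag F) : Fin R.n → ℕ → Prop
  | leaf (i) (h : R.pred i = none) : PathLen R i 0
  | step (i j m) (h : R.parent j i) (hj : PathLen R j m) : PathLen R i (m + 1)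

end RDag

/-- w-resolution dags. -/
structure WRDag (F : CNF) where
  n : ℕ
  npos : 0 < n
  clause : Fin n → Clause
  pred : Fin n → Option (Fin n × Fin n × Var)
  topo : ∀ i p, pred i = some p → p.1 < i ∧ p.2.1 < i
  leaf_mem : ∀ i, pred i = none → clause i ∈ F
  res_ok : ∀ i j k x, pred i = some (j, k, x) →
    clause i = Resolvent (clause j) (clause k) x

namespace WRDag

variable {F : CNF}

def root (R : WRDag F) : Fin R.n := ⟨R.n - 1, Nat.sub_lt R.npos one_pos⟩

def parent (R : WRDag F) (j i : Fin R.n) : Prop :=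
  ∃ p, R.pred i = some p ∧ (p.1 = j ∨ p.2.1 = j)

def resVar (R : WRDag F) (i : Fin R.n) : Option Var := (R.pred i).map (fun p => p.2.2)

def regular (R : WRDag F) : Prop :=
  ∀ i j x, Relation.TransGen R.parent j i → R.resVar i = some x → R.resVar j ≠ some x

def IsRefutation (R : WRDag F) : Prop := R.clause R.root = ∅

/-- `PathLits R v S`: there is a path from `v` to the root of `R` whose set of
edge labels is `S` (the edge from the first premise is labeled `¬x`, from the
second premise `x`). -/
inductive PathLits (R : WRDag F) : Fin R.n → Set Lit → Prop
  | root : PathLits R R.root ∅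
  | left (i j k x S) (h : R.pred i = some (j, k, x)) (hi : PathLits R i S) :
      PathLits R j (insert (negLit x) S)
  | right (i j k x S) (h : R.pred i = some (j, k, x)) (hi : PathLits R i S) :
      PathLits R k (insert (posLit x) S)

end WRDag
/-- A conflict graph for `F` under `α`.  The special node `□` is left implicit:
`x` is the conflict variable, and the edges from `x` and `¬x` to `□` are not
represented. -/
structure ConflictGraph (F : CNF) (α : Assign) where
  V : Finset Lit
  E : Finset (Lit × Lit)
  x : Var
  pos_mem : posLit x ∈ V
  neg_mem : negLit x ∈ V
  uniq : ∀ y, posLit y ∈ V → negLit y ∈ V → y = x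
  edges_mem : ∀ e ∈ E, e.1 ∈ V ∧ e.2 ∈ V
  acyclic : ∃ rank : Lit → ℕ, ∀ e ∈ E, rank e.1 < rank e.2
  leaf_true : ∀ l ∈ V, (∀ e ∈ E, e.2 ≠ l) → α l.1 = some l.2
  internal_clause : ∀ l ∈ V, (∃ e ∈ E, e.2 = l) →
      insert l ((V.filter (fun p => (p, l) ∈ E)).image Lit.neg) ∈ F
  sink : ∀ l ∈ V, (∃ e ∈ E, e.1 = l) ∨ l = posLit x ∨ l = negLit x

namespace ConflictGraph

variable {F : CNF} {α : Assign}

def leaves (G : ConflictGraph F α) : Finset Lit :=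
  G.V.filter (fun l => ∀ e ∈ G.E, e.2 ≠ l)

/-- The conflict clause: negations of the leaf literals. -/
def conflictClause (G : ConflictGraph F α) : Clause := G.leaves.image Lit.neg

def Reach (G : ConflictGraph F α) (a b : Lit) : Prop :=
  Relation.ReflTransGen (fun u v => (u, v) ∈ G.E) a b

/-- The induced clause of a literal `l`. -/
def inducedClause (G : ConflictGraph F α) (l : Lit) : Clause :=
  insert l ((G.leaves.filter (fun p => G.Reach p l)).image Lit.neg)

end ConflictGraph

/-- `H` is a subconflict graph of `G`. -/
def Subconflict {F : CNF} {α : Assign} (H G : ConflictGraph F α) : Prop :=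
  H.V ⊆ G.V ∧ H.E ⊆ G.E ∧ H.x = G.x ∧
  ∀ l ∈ H.V, (∃ e ∈ H.E, e.2 = l) → ∀ e ∈ G.E, e.2 = l → e ∈ H.E

/-- `H` is a proper subconflict graph of `G`: additionally, no path in `G` runs
from a non-leaf vertex of `H` to a leaf of `H`. -/
def ProperSub {F : CNF} {α : Assign} (H G : ConflictGraph F α) : Prop :=
  Subconflict H G ∧
  ∀ l ∈ H.V, (∃ e ∈ H.E, e.2 = l) → ∀ p ∈ H.leaves, ¬ G.Reach l p

def StrictSub {F : CNF} {α : Assign} (H G : ConflictGraph F α) : Prop :=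
  Subconflict H G ∧ (H.V ≠ G.V ∨ H.E ≠ G.E)

/-- A series-parallel decomposition of a conflict graph `G`:
`H i 0 = H_i` for `i ≤ k` and `H i j = H_{i,j}` for `j ≤ m i`. -/
structure SPDecomp {F : CNF} {α : Assign} (G : ConflictGraph F α) where
  k : ℕ
  hk : 1 ≤ k
  m : ℕ → ℕ
  hm : ∀ i < k, 1 ≤ m i
  H : ℕ → ℕ → ConflictGraph F α
  base_V : (H 0 0).V = {posLit G.x, negLit G.x}
  base_E : (H 0 0).E = ∅
  chain : ∀ i < k, ∀ j < m i, StrictSub (H i j) (H i (j + 1))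
  proper : ∀ i < k, ∀ j ≤ m i, ProperSub (H i j) G
  link : ∀ i, i + 1 < k → H i (m i) = H (i + 1) 0
  top : H (k - 1) (m (k - 1)) = G

/-- The learnable clauses of a series-parallel decomposition. -/
def SPDecomp.learnable {F : CNF} {α : Assign} {G : ConflictGraph F α}
    (D : SPDecomp G) : Set Clause :=
  {C | ∃ j, 1 ≤ j ∧ j ≤ D.m 0 ∧ C = (D.H 0 j).conflictClause} ∪
  {C | ∃ i j l, 0 < i ∧ i < D.k ∧ 1 ≤ j ∧ j ≤ D.m i ∧
      l ∈ (D.H i 0).leaves ∧ l ∉ (D.H i j).leaves ∧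
      C = (D.H i j).inducedClause l}

def SPDecomp.isSeries {F : CNF} {α : Assign} {G : ConflictGraph F α}
    (D : SPDecomp G) : Prop := D.k = 1

/-- Executions of the basic DLL algorithm returning UNSAT;
the `ℕ` counts the recursive calls made. -/
inductive DLLUnsat (F : CNF) : Assign → ℕ → Prop
  | conflict (α) (h : CNFFalse F α) : DLLUnsat F α 0
  | branch (α) (x : Var) (ε : Bool) (s0 s1 : ℕ)
      (hnot0 : ¬ CNFFalse F α) (hnot1 : ¬ CNFTrue F α) (hx : α x = none)
      (h0 : DLLUnsat F (α.set x ε) s0) (h1 : DLLUnsat F (α.set x (!ε)) s1) :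
      DLLUnsat F α (s0 + s1 + 2)

/-- Executions of the (non-greedy) DLL-L-UP algorithm returning UNSAT:
`DLLLUP F α s F'` means the call on `(F, α)` returns `(F', UNSAT)` after `s`
recursive calls. -/
inductive DLLLUP : CNF → Assign → ℕ → CNF → Prop
  | conflict (F : CNF) (α : Assign) (G : ConflictGraph F α) (D : SPDecomp G)
      (S : Set Clause) (hS : S ⊆ D.learnable) : DLLLUP F α 0 (F ∪ S)
  | branch (F : CNF) (α : Assign) (x : Var) (ε : Bool) (s0 s1 : ℕ) (F1 F2 : CNF)
      (hx : α x = none)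
      (h0 : DLLLUP F (α.set x ε) s0 F1) (h1 : DLLLUP F1 (α.set x (!ε)) s1 F2) :
      DLLLUP F α (s0 + s1 + 2) F2

/-- Executions of DLL-Learn returning UNSAT: `DLLLearn F α s F' C` means the
call on `(F, α)` returns `(F', UNSAT)` with tagged clause `C` after `s`
recursive calls. -/
inductive DLLLearn : CNF → Assign → ℕ → CNF → Clause → Prop
  | base (F : CNF) (α : Assign) (C : Clause) (hC : C ∈ F) (hf : falsifies α C) :
      DLLLearn F α 0 F C
  | branch (F : CNF) (α : Assign) (x : Var) (ε : Bool) (s0 s1 : ℕ)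
      (F1 F2 : CNF) (C0 C1 : Clause) (hx : α x = none)
      (h0 : DLLLearn F (α.set x ε) s0 F1 C0)
      (h1 : DLLLearn F1 (α.set x (!ε)) s1 F2 C1) :
      DLLLearn F α (s0 + s1 + 2)
        (F2 ∪ {C0.erase (x, !ε) ∪ C1.erase (x, ε)})
        (C0.erase (x, !ε) ∪ C1.erase (x, ε))

/-- Trees of resolution and weakening inferences. -/
inductive WTree where
  | leaf (C : Clause)
  | res (C : Clause) (x : Var) (t0 t1 : WTree)
  | weak (C : Clause) (t : WTree)

namespace WTree

def conc : WTree → Clause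
  | leaf C => C
  | res C _ _ _ => C
  | weak C _ => C

def size : WTree → ℕ
  | leaf _ => 1
  | res _ _ t0 t1 => t0.size + t1.size + 1
  | weak _ t => t.size + 1

def allClauses : WTree → Set Clause
  | leaf C => {C}
  | res C _ t0 t1 => {C} ∪ t0.allClauses ∪ t1.allClauses
  | weak C t => {C} ∪ t.allClauses

def leafClauses : WTree → Set Clause
  | leaf C => {C}
  | res _ _ t0 t1 => t0.leafClauses ∪ t1.leafClauses
  | weak _ t => t.leafClauses

end WTree

/-- Resolution trees with lemmas and weakening, all lemmas of size `≤ k`. -/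
def IsRTLW (F : CNF) (k : ℕ) : WTree → Set Clause → Prop
  | .leaf C, avail => C ∈ F ∨ (C ∈ avail ∧ C.card ≤ k)
  | .res C x t0 t1, avail => IsRTLW F k t0 avail ∧ IsRTLW F k t1 (avail ∪ t0.allClauses) ∧
      posLit x ∈ t0.conc ∧ negLit x ∈ t1.conc ∧ C = Resolvent t0.conc t1.conc x
  | .weak C t, avail => IsRTLW F k t avail ∧ t.conc ⊆ C

def phpVar (n i j : ℕ) : Var := i * n + j

/-- The clauses of the functional pigeonhole principle `FPHP_n`. -/
def FPHP (n : ℕ) : CNF :=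
  {C | ∃ i, 1 ≤ i ∧ i ≤ n + 1 ∧
      C = (Finset.Icc 1 n).image (fun j => posLit (phpVar n i j))} ∪
  {C | ∃ i j k, 1 ≤ i ∧ i < j ∧ j ≤ n + 1 ∧ 1 ≤ k ∧ k ≤ n ∧
      C = {negLit (phpVar n i k), negLit (phpVar n j k)}} ∪
  {C | ∃ i j k, 1 ≤ i ∧ i ≤ n + 1 ∧ 1 ≤ j ∧ j < k ∧ k ≤ n ∧
      C = {negLit (phpVar n i j), negLit (phpVar n i k)}}

/-- The variable extension `VE(F)` with extension variables `q` and `P`. -/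
def VE (F : CNF) (q : Var) (P : Finset Var) : CNF :=
  F ∪ {D | ∃ C ∈ F, ∃ l ∈ C, D = {posLit q, Lit.neg l}} ∪ {P.image posLit}

lemma resolvent_mono {C0 C1 D0 D1 : Clause} {x : Var} (h0 : D0 ⊆ C0) (h1 : D1 ⊆ C1) :
    Resolvent D0 D1 x ⊆ Resolvent C0 C1 x :=
  Finset.union_subset_union (Finset.erase_subset_erase _ h0) (Finset.erase_subset_erase _ h1)

lemma subset_resolvent_left {C0 C1 D0 : Clause} {x : Var} (h0 : D0 ⊆ C0)
    (hx : posLit x ∉ D0) : D0 ⊆ Resolvent C0 C1 x := by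
  intro l hl
  exact Finset.mem_union.2 (Or.inl (Finset.mem_erase.2 ⟨fun h => hx (h ▸ hl), h0 hl⟩))

lemma subset_resolvent_right {C0 C1 D1 : Clause} {x : Var} (h1 : D1 ⊆ C1)
    (hx : negLit x ∉ D1) : D1 ⊆ Resolvent C0 C1 x := by
  intro l hl
  exact Finset.mem_union.2 (Or.inr (Finset.mem_erase.2 ⟨fun h => hx (h ▸ hl), h1 hl⟩))

lemma isResDeriv_append (F : CNF) (L' : List Clause) (D : Clause) (h : IsResDeriv F L')
    (hD : D ∈ F ∨ ∃ j k x, ∃ hj : j < L'.length, ∃ hk : k < L'.length,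
      posLit x ∈ L'[j] ∧ negLit x ∈ L'[k] ∧ D = Resolvent L'[j] L'[k] x) :
    IsResDeriv F (L' ++ [D]) := by
  intro i hi
  have hlen : (L' ++ [D]).length = L'.length + 1 := by simp
  rcases Nat.lt_or_ge i L'.length with hlt | hge
  · have he : (L' ++ [D])[i] = L'[i] := List.getElem_append_left hlt
    rcases h i hlt with hmem | ⟨j, k, x, hj, hk, hji, hki, hpj, hnk, heq⟩
    · exact Or.inl (he ▸ hmem)
    · refine Or.inr ⟨j, k, x, by omega, by omega, hji, hki, ?_, ?_, ?_⟩
      · rw [List.getElem_append_left hj]; exact hpj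
      · rw [List.getElem_append_left hk]; exact hnk
      · rw [he, List.getElem_append_left hj, List.getElem_append_left hk]; exact heq
  · have hieq : i = L'.length := by omega
    subst hieq
    have he : (L' ++ [D])[L'.length]'hi = D := by simp
    rcases hD with hmem | ⟨j, k, x, hj, hk, hpj, hnk, heq⟩
    · exact Or.inl (by rw [he]; exact hmem)
    · refine Or.inr ⟨j, k, x, by omega, by omega, hj, hk, ?_, ?_, ?_⟩
      · rw [List.getElem_append_left hj]; exact hpj
      · rw [List.getElem_append_left hk]; exact hnk
      · rw [he, List.getElem_append_left hj, List.getElem_append_left hk]; exact heq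

/-- Prop. 2.2 (w-resolution part): a WRD proof of `C` of size `n` yields an RD
proof of some `C' ⊆ C` of size `≤ n`. -/
theorem stmt0 (F : CNF) (C : Clause) (L : List Clause) (n : ℕ)
    (hL : IsWResDeriv F L) (hlast : L.getLast? = some C) (hn : L.length = n) :
    ∃ (L' : List Clause) (C' : Clause), C' ⊆ C ∧ IsResDeriv F L' ∧
      L'.getLast? = some C' ∧ L'.length ≤ n := by
  subst hn
  have key : ∀ m, m ≤ L.length → ∃ L' : List Clause, L'.length = m ∧ IsResDeriv F L' ∧
      ∀ i, ∀ h : i < m, ∃ (hiL : i < L.length) (hi' : i < L'.length), L'[i] ⊆ L[i] := by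
    intro m
    induction m with
    | zero =>
      intro _
      exact ⟨[], rfl, fun i hi => by simp at hi, fun i h => by omega⟩
    | succ m ih =>
      intro hm
      obtain ⟨L', hlen, hres, hsub⟩ := ih (by omega)
      have hmL : m < L.length := hm
      have step : ∃ D : Clause, D ⊆ L[m] ∧
          (D ∈ F ∨ ∃ j k x, ∃ hj : j < L'.length, ∃ hk : k < L'.length,
            posLit x ∈ L'[j] ∧ negLit x ∈ L'[k] ∧ D = Resolvent L'[j] L'[k] x) := by
        rcases hL m hmL with hmem | ⟨j, k, x, hjL, hkL, hjm, hkm, heq⟩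
        · exact ⟨L[m], Finset.Subset.refl _, Or.inl hmem⟩
        · obtain ⟨_, hj', hsubj⟩ := hsub j hjm
          obtain ⟨_, hk', hsubk⟩ := hsub k hkm
          by_cases hpx : posLit x ∈ L'[j]
          · by_cases hnx : negLit x ∈ L'[k]
            · refine ⟨Resolvent L'[j] L'[k] x, ?_, Or.inr ⟨j, k, x, hj', hk', hpx, hnx, rfl⟩⟩
              rw [heq]; exact resolvent_mono hsubj hsubk
            · refine ⟨L'[k], ?_, ?_⟩
              · rw [heq]; exact subset_resolvent_right hsubk hnx
              · rcases hres k hk' with h | ⟨a, b, y, ha, hb, hak, hbk, hpa, hnb, heq'⟩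
                · exact Or.inl h
                · exact Or.inr ⟨a, b, y, ha, hb, hpa, hnb, heq'⟩
          · refine ⟨L'[j], ?_, ?_⟩
            · rw [heq]; exact subset_resolvent_left hsubj hpx
            · rcases hres j hj' with h | ⟨a, b, y, ha, hb, haj, hbj, hpa, hnb, heq'⟩
              · exact Or.inl h
              · exact Or.inr ⟨a, b, y, ha, hb, hpa, hnb, heq'⟩
      obtain ⟨D, hDsub, hDjust⟩ := step
      refine ⟨L' ++ [D], by simp [hlen], isResDeriv_append F L' D hres hDjust, ?_⟩
      intro i hi
      rcases Nat.lt_or_ge i m with hlt | hge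
      · obtain ⟨hiL, hi', hs⟩ := hsub i hlt
        refine ⟨hiL, by simp; omega, ?_⟩
        rw [List.getElem_append_left hi']; exact hs
      · have hieq : i = m := by omega
        subst hieq
        refine ⟨hmL, by simp [hlen], ?_⟩
        have : (L' ++ [D])[i]'(by simp [hlen]) = D := by
          subst hlen; simp
        rw [this]; exact hDsub
  obtain ⟨L', hlen, hres, hsub⟩ := key L.length le_rfl
  have hLne : L ≠ [] := by
    intro h; rw [h] at hlast; simp at hlast
  have hpos : 0 < L.length := List.length_pos_iff.2 hLne
  obtain ⟨hiL, hi', hs⟩ := hsub (L.length - 1) (by omega)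
  have hC : L[L.length - 1] = C := by
    rw [List.getLast?_eq_getElem?] at hlast
    rw [List.getElem?_eq_getElem hiL] at hlast
    exact Option.some_injective _ hlast
  refine ⟨L', L'[L.length - 1], hC ▸ hs, hres, ?_, by omega⟩
  rw [List.getLast?_eq_getElem?, hlen, List.getElem?_eq_getElem hi']
end
end

section
/- Let G be a regular w-resolution refutation of a CNF F and let C be any clause in G. If α is a partial assignment making true every literal labeling an edge on the path from C to the final (empty) clause, then α falsifies every literal of C (i.e., C restricted by α equals 0). -/
open Classical

noncomputable section

/-- Thm. 2.4(b): if `α` satisfies every literal labeling an edge on a path from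
`v` to the final clause of a regular w-resolution refutation, then `α`
falsifies the clause at `v`. -/
theorem stmt3 (F : CNF) (R : WRDag F) (hreg : R.regular) (href : R.IsRefutation)
    (v : Fin R.n) (S : Set Lit) (hp : R.PathLits v S) (α : Assign)
    (hα : ∀ l ∈ S, satLit α l) : falsifies α (R.clause v) := by
  induction hp with
  | root =>
    intro l hl
    rw [href] at hl
    exact absurd hl (Finset.notMem_empty l)
  | left i j k x S h hi ih =>
    have hS : ∀ l ∈ S, satLit α l := fun l hl => hα l (Set.mem_insert_of_mem _ hl)
    have hneg : satLit α (negLit x) := hα _ (Set.mem_insert _ _)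
    have hres := R.res_ok i j k x h
    intro l hl
    by_cases hlx : l = posLit x
    · subst hlx; exact hneg
    · have : l ∈ R.clause i := by
        rw [hres, Resolvent]
        exact Finset.mem_union_left _ (Finset.mem_erase.mpr ⟨hlx, hl⟩)
      exact ih hS l this
  | right i j k x S h hi ih =>
    have hS : ∀ l ∈ S, satLit α l := fun l hl => hα l (Set.mem_insert_of_mem _ hl)
    have hpos : satLit α (posLit x) := hα _ (Set.mem_insert _ _)
    have hres := R.res_ok i j k x h
    intro l hl
    by_cases hlx : l = negLit x
    · subst hlx; exact hpos
    · have : l ∈ R.clause i := by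
        rw [hres, Resolvent]
        exact Finset.mem_union_right _ (Finset.mem_erase.mpr ⟨hlx, hl⟩)
      exact ih hS l this
end
end

section
/- Resolution trees with lemmas (RTL) and resolution dags (RD) polynomially simulate each other: an RD of size s can be converted into an RTL of size polynomial in s deriving the same clause, and conversely. -/
open Classical

noncomputable section

def IsPolyBound (p : ℕ → ℕ) : Prop := ∃ c e : ℕ, ∀ s, p s ≤ c * (s + 1) ^ e

/-! ### Auxiliary development for `stmt6` -/

section Stmt6Aux

/-- Direction 1: from a resolution dag to an RTL, by DFS with memoization.
`S` is the set of already-expanded dag indices. -/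
private lemma rd_to_rtl (F : CNF) (R : RDag F) :
    ∀ i, ∀ hi : i < R.n, ∀ (S : Finset ℕ) (avail : Set Clause),
    (∀ m ∈ S, ∃ h : m < R.n, R.clause ⟨m, h⟩ ∈ avail) →
    ∃ (t : RTree) (S' : Finset ℕ), S ⊆ S' ∧ i ∈ S' ∧ (∀ m ∈ S', m ∈ S ∨ m ≤ i) ∧
      IsRTL F t avail ∧ t.conc = R.clause ⟨i, hi⟩ ∧
      (∀ m ∈ S', ∃ h : m < R.n, R.clause ⟨m, h⟩ ∈ avail ∪ t.allClauses) ∧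
      t.size + 2 * S.card ≤ 2 * S'.card + 1 := by
  intro i
  induction i using Nat.strong_induction_on with
  | _ i ih =>
    intro hi S avail hS
    by_cases hiS : i ∈ S
    · refine ⟨.leaf (R.clause ⟨i, hi⟩), S, subset_rfl, hiS, fun m hm => Or.inl hm, ?_, rfl,
        ?_, ?_⟩
      · obtain ⟨h, hc⟩ := hS i hiS
        exact Or.inr hc
      · intro m hm; obtain ⟨h, hc⟩ := hS m hm; exact ⟨h, Or.inl hc⟩
      · simp [RTree.size]; omega
    · rcases hp : R.pred ⟨i, hi⟩ with _ | ⟨j, k, x⟩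
      · refine ⟨.leaf (R.clause ⟨i, hi⟩), insert i S, Finset.subset_insert _ _,
          Finset.mem_insert_self _ _, ?_, Or.inl (R.leaf_mem _ hp), rfl, ?_, ?_⟩
        · intro m hm
          rcases Finset.mem_insert.mp hm with h | h
          · right; omega
          · left; exact h
        · intro m hm
          rcases Finset.mem_insert.mp hm with h | h
          · subst h; exact ⟨hi, Or.inr rfl⟩
          · obtain ⟨h', hc⟩ := hS m h; exact ⟨h', Or.inl hc⟩
        · rw [Finset.card_insert_of_notMem hiS]; simp [RTree.size]; omega
      · obtain ⟨hj, hk⟩ := R.topo _ _ hp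
        have hj' : (j : ℕ) < i := hj
        have hk' : (k : ℕ) < i := hk
        obtain ⟨hxj, hxk, hresi⟩ := R.res_ok _ _ _ _ hp
        obtain ⟨t0, S0, hSS0, hjS0, hS0le, ht0, hc0, hcov0, hsz0⟩ :=
          ih j.val hj' j.isLt S avail hS
        obtain ⟨t1, S1, hS0S1, hkS1, hS1le, ht1, hc1, hcov1, hsz1⟩ :=
          ih k.val hk' k.isLt S0 (avail ∪ t0.allClauses) hcov0
        have hiS1 : i ∉ S1 := by
          intro hmem
          rcases hS1le i hmem with h | h
          · rcases hS0le i h with h' | h'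
            · exact hiS h'
            · exact absurd h' (by omega)
          · exact absurd h (by omega)
        have hc0' : t0.conc = R.clause j := by rw [hc0]
        have hc1' : t1.conc = R.clause k := by rw [hc1]
        refine ⟨.node (R.clause ⟨i, hi⟩) x t0 t1, insert i S1,
          hSS0.trans (hS0S1.trans (Finset.subset_insert _ _)),
          Finset.mem_insert_self _ _, ?_, ?_, rfl, ?_, ?_⟩
        · intro m hm
          rcases Finset.mem_insert.mp hm with h | h
          · right; omega
          · rcases hS1le m h with h' | h'
            · rcases hS0le m h' with h'' | h''
              · left; exact h''
              · right; omega
            · right; omega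
        · exact ⟨ht0, ht1, by rw [hc0']; exact hxj, by rw [hc1']; exact hxk,
            by rw [hc0', hc1']; exact hresi⟩
        · intro m hm
          rcases Finset.mem_insert.mp hm with h | h
          · subst h
            exact ⟨hi, Or.inr (by simp [RTree.allClauses])⟩
          · obtain ⟨h', hc⟩ := hcov1 m h
            refine ⟨h', ?_⟩
            rcases hc with (hc | hc) | hc
            · exact Or.inl hc
            · exact Or.inr (by simp [RTree.allClauses]; tauto)
            · exact Or.inr (by simp [RTree.allClauses]; tauto)
        · have h01 : S0.card ≤ S1.card := Finset.card_le_card hS0S1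
          have hS0c : S.card ≤ S0.card := Finset.card_le_card hSS0
          rw [Finset.card_insert_of_notMem hiS1]
          simp only [RTree.size]
          omega

/-- Entries of a pre-dag: a clause together with optional premises. -/
private abbrev DEntry := Clause × Option (ℕ × ℕ × Var)

private def csL (L : List DEntry) (p : ℕ) : Clause := (L.getD p (∅, none)).1
private def prL (L : List DEntry) (p : ℕ) : Option (ℕ × ℕ × Var) := (L.getD p (∅, none)).2

private lemma csL_append {L M : List DEntry} {p : ℕ} (h : p < L.length) :
    csL (L ++ M) p = csL L p := by
  unfold csL; rw [List.getD_append _ _ _ _ h]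

private lemma prL_append {L M : List DEntry} {p : ℕ} (h : p < L.length) :
    prL (L ++ M) p = prL L p := by
  unfold prL; rw [List.getD_append _ _ _ _ h]

private lemma csL_last {L : List DEntry} {e : DEntry} : csL (L ++ [e]) L.length = e.1 := by
  unfold csL; rw [List.getD_append_right _ _ _ _ le_rfl]; simp

private lemma prL_last {L : List DEntry} {e : DEntry} : prL (L ++ [e]) L.length = e.2 := by
  unfold prL; rw [List.getD_append_right _ _ _ _ le_rfl]; simp

private def EntryOk (F : CNF) (L : List DEntry) : Prop :=
  ∀ p, p < L.length →
    (prL L p = none → csL L p ∈ F) ∧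
    ∀ j k x, prL L p = some (j, k, x) →
      j < p ∧ k < p ∧ posLit x ∈ csL L j ∧ negLit x ∈ csL L k ∧
      csL L p = Resolvent (csL L j) (csL L k) x

private lemma entryOk_append (F : CNF) {L : List DEntry} (hL : EntryOk F L) (e : DEntry)
    (he1 : e.2 = none → e.1 ∈ F)
    (he2 : ∀ j k x, e.2 = some (j, k, x) → j < L.length ∧ k < L.length ∧
      posLit x ∈ csL L j ∧ negLit x ∈ csL L k ∧ e.1 = Resolvent (csL L j) (csL L k) x) :
    EntryOk F (L ++ [e]) := by
  intro p hp
  rcases lt_or_ge p L.length with h | h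
  · obtain ⟨h1, h2⟩ := hL p h
    rw [csL_append h, prL_append h]
    refine ⟨h1, fun j k x hjk => ?_⟩
    obtain ⟨hj, hk, hpj, hnk, hres⟩ := h2 j k x hjk
    rw [csL_append (hj.trans h), csL_append (hk.trans h)]
    exact ⟨hj, hk, hpj, hnk, hres⟩
  · have hpe : p = L.length := by simp at hp; omega
    subst hpe
    rw [csL_last, prL_last]
    refine ⟨he1, fun j k x hjk => ?_⟩
    obtain ⟨hj, hk, hpj, hnk, hres⟩ := he2 j k x hjk
    rw [csL_append hj, csL_append hk]
    exact ⟨hj, hk, hpj, hnk, hres⟩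

/-- Build a resolution dag from an `EntryOk` list. -/
private def mkDag (F : CNF) (L : List DEntry) (h : EntryOk F L) (hne : 0 < L.length) :
    RDag F where
  n := L.length
  npos := hne
  clause i := csL L i
  pred i := (prL L i.val).bind fun q =>
    if hq : q.1 < L.length ∧ q.2.1 < L.length then
      some (⟨q.1, hq.1⟩, ⟨q.2.1, hq.2⟩, q.2.2) else none
  topo := by
    intro i p hp
    beta_reduce at hp
    rcases hq : prL L i.val with _ | q
    · rw [hq] at hp; simp at hp
    · rw [hq] at hp
      simp only [Option.bind_some] at hp
      split_ifs at hp with h2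
      · obtain ⟨hj, hk, _, _, _⟩ := (h i.val i.isLt).2 q.1 q.2.1 q.2.2 (by rw [hq])
        cases hp
        exact ⟨hj, hk⟩
  leaf_mem := by
    intro i hp
    beta_reduce at hp ⊢
    rcases hq : prL L i.val with _ | q
    · exact (h i.val i.isLt).1 hq
    · obtain ⟨hj, hk, _, _, _⟩ := (h i.val i.isLt).2 q.1 q.2.1 q.2.2 (by rw [hq])
      rw [hq] at hp
      simp only [Option.bind_some] at hp
      rw [dif_pos ⟨hj.trans i.isLt, hk.trans i.isLt⟩] at hp
      cases hp
  res_ok := by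
    intro i j k x hp
    beta_reduce at hp ⊢
    rcases hq : prL L i.val with _ | q
    · rw [hq] at hp; simp at hp
    · obtain ⟨hj, hk, hpj, hnk, hres⟩ := (h i.val i.isLt).2 q.1 q.2.1 q.2.2 (by rw [hq])
      rw [hq] at hp
      simp only [Option.bind_some] at hp
      rw [dif_pos ⟨hj.trans i.isLt, hk.trans i.isLt⟩] at hp
      injection hp with hp
      simp only [Prod.mk.injEq] at hp
      obtain ⟨hj', hk', hx'⟩ := hp
      subst hj'; subst hk'; subst hx'
      exact ⟨hpj, hnk, hres⟩

end Stmt6Aux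

/-- Direction 2: from an RTL to a pre-dag list, by post-order traversal. -/
private lemma rtl_to_rd (F : CNF) : ∀ (t : RTree) (avail : Set Clause) (acc : List DEntry),
    IsRTL F t avail → EntryOk F acc →
    (∀ C ∈ avail, ∃ p, p < acc.length ∧ csL acc p = C) →
    ∃ (L : List DEntry) (r : ℕ),
      EntryOk F (acc ++ L) ∧ r < (acc ++ L).length ∧ csL (acc ++ L) r = t.conc ∧
      (∀ C ∈ t.allClauses, ∃ p, p < (acc ++ L).length ∧ csL (acc ++ L) p = C) ∧
      L.length ≤ t.size ∧
      (∀ C x t0 t1, t = RTree.node C x t0 t1 → r + 1 = (acc ++ L).length) := by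
  intro t
  induction t with
  | leaf C =>
    intro avail acc ht hacc hav
    rcases ht with hF | hA
    · refine ⟨[(C, none)], acc.length,
        entryOk_append F hacc _ (fun _ => hF) (by simp), by simp, csL_last, ?_,
        by simp [RTree.size], by simp⟩
      intro D hD
      have : D = C := hD
      exact ⟨acc.length, by simp, by rw [csL_last, this]⟩
    · obtain ⟨p, hp, hcp⟩ := hav C hA
      refine ⟨[], p, by simpa using hacc, by simpa using hp, by simpa [RTree.conc] using hcp, ?_,
        by simp [RTree.size], by simp⟩
      intro D hD
      have : D = C := hD
      exact ⟨p, by simpa using hp, by rw [this]; simpa using hcp⟩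
  | node C x t0 t1 ih0 ih1 =>
    intro avail acc ht hacc hav
    obtain ⟨h0, h1, hx0, hx1, hres⟩ := ht
    obtain ⟨L0, r0, hok0, hr0, hc0, hcov0, hlen0, -⟩ := ih0 avail acc h0 hacc hav
    have hav1 : ∀ D ∈ avail ∪ t0.allClauses,
        ∃ p, p < (acc ++ L0).length ∧ csL (acc ++ L0) p = D := by
      intro D hD
      rcases hD with hD | hD
      · obtain ⟨p, hp, hc⟩ := hav D hD
        exact ⟨p, by simp; omega, by rw [csL_append hp]; exact hc⟩
      · exact hcov0 D hD
    obtain ⟨L1, r1, hok1, hr1, hc1, hcov1, hlen1, -⟩ := ih1 _ (acc ++ L0) h1 hok0 hav1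
    have hMeq : ∀ e : DEntry, acc ++ (L0 ++ L1 ++ [e]) = ((acc ++ L0) ++ L1) ++ [e] := by
      intro e; simp [List.append_assoc]
    set e : DEntry := (C, some (r0, r1, x)) with he
    set M : List DEntry := (acc ++ L0) ++ L1 with hM
    have hMlen : M.length = acc.length + L0.length + L1.length := by rw [hM]; simp; omega
    have hr0' : r0 < acc.length + L0.length := by simpa using hr0
    have hr0M : r0 < M.length := by omega
    have hok : EntryOk F (M ++ [e]) := by
      refine entryOk_append F hok1 e (by simp [he]) ?_
      intro j k y hjk
      simp only [he] at hjk
      injection hjk with hjk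
      obtain ⟨rfl, rfl, rfl⟩ := Prod.mk.injEq .. ▸ hjk
      refine ⟨hr0M, hr1, ?_, ?_, ?_⟩
      · rw [hM, csL_append hr0, hc0]; exact hx0
      · rw [hc1]; exact hx1
      · rw [hM, csL_append hr0, hc0, hc1]; exact hres
    refine ⟨L0 ++ L1 ++ [e], M.length, by rw [hMeq]; exact hok, by rw [hMeq]; simp,
      ?_, ?_, ?_, ?_⟩
    · rw [hMeq]; exact csL_last
    · intro D hD
      rcases hD with (hD | hD) | hD
      · have : D = C := hD
        exact ⟨M.length, by rw [hMeq]; simp, by rw [hMeq, csL_last, this]⟩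
      · obtain ⟨p, hp, hc⟩ := hcov0 D hD
        have hp' : p < acc.length + L0.length := by simpa using hp
        have hpM : p < M.length := by omega
        refine ⟨p, by rw [hMeq]; simp; omega, ?_⟩
        rw [hMeq, csL_append hpM, hM, csL_append hp]; exact hc
      · obtain ⟨p, hp, hc⟩ := hcov1 D hD
        have hp' : p < M.length := hp
        refine ⟨p, by rw [hMeq]; simp; omega, ?_⟩
        rw [hMeq, csL_append hp]; exact hc
    · simp only [RTree.size]
      simp at hlen0 hlen1 ⊢
      omega
    · intro C' x' t0' t1' _
      rw [hMeq]; simp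

/-- RTL and RD p-simulate each other. -/
theorem stmt6 :
    (∃ p : ℕ → ℕ, IsPolyBound p ∧
      ∀ (F : CNF) (R : RDag F), ∃ t : RTree,
        IsRTL F t ∅ ∧ t.conc = R.clause R.root ∧ t.size ≤ p R.n) ∧
    (∃ p : ℕ → ℕ, IsPolyBound p ∧
      ∀ (F : CNF) (t : RTree), IsRTL F t ∅ →
        ∃ R : RDag F, R.clause R.root = t.conc ∧ R.n ≤ p t.size) := by
  constructor
  · refine ⟨fun s => 2 * s + 1, ⟨2, 1, fun s => by simp⟩, ?_⟩
    intro F R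
    have hroot : R.n - 1 < R.n := Nat.sub_lt R.npos one_pos
    obtain ⟨t, S', -, -, hle, ht, hconc, -, hsz⟩ :=
      rd_to_rtl F R (R.n - 1) hroot ∅ ∅ (by simp)
    refine ⟨t, ht, hconc, ?_⟩
    show t.size ≤ 2 * R.n + 1
    have hsub : S' ⊆ Finset.range R.n := by
      intro m hm
      rcases hle m hm with h | h
      · simp at h
      · simp; omega
    have := Finset.card_le_card hsub
    simp [Finset.card_range] at this
    simp at hsz
    omega
  · refine ⟨fun s => s, ⟨1, 1, fun s => by simp⟩, ?_⟩
    intro F t ht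
    cases t with
    | leaf C =>
      have hF : C ∈ F := by
        rcases ht with h | h
        · exact h
        · exact absurd h (Set.notMem_empty C)
      refine ⟨⟨1, one_pos, fun _ => C, fun _ => none, by simp, fun _ _ => hF,
        by simp⟩, rfl, by simp [RTree.size]⟩
    | node C x t0 t1 =>
      obtain ⟨L, r, hok, hr, hc, -, hlen, hlast⟩ :=
        rtl_to_rd F (RTree.node C x t0 t1) ∅ [] ht (by intro p hp; simp at hp) (by simp)
      have hlen' : ([] ++ L : List DEntry).length = L.length := by simp
      have hne : 0 < L.length := by
        have := hlast C x t0 t1 rfl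
        rw [hlen'] at this
        omega
      have hrlast : r = L.length - 1 := by
        have := hlast C x t0 t1 rfl
        rw [hlen'] at this
        omega
      refine ⟨mkDag F L (by simpa using hok) hne, ?_, ?_⟩
      · show csL L (L.length - 1) = _
        rw [← hrlast]
        simpa using hc
      · exact hlen
end
end

section
/- Let F be an unsatisfiable set of clauses and α a partial assignment. If an execution of the basic DLL backtracking algorithm DLL(F, α) returns UNSAT after s recursive calls, then there exists a clause C falsified by α that has a regular resolution tree derivation T from F with |T| ≤ s+1 such that no variable in the domain of α is used as a resolution variable in T. -/
open Classical

noncomputable section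

lemma regAux_mono : ∀ (t : RTree) (s s' : Set Var), t.regAux s →
    (∀ y ∈ t.resVars, y ∈ s' → y ∈ s) → t.regAux s'
  | .leaf _, _, _, _, _ => trivial
  | .node C x t0 t1, s, s', h, hsub => by
    obtain ⟨hx, h0, h1⟩ := h
    refine ⟨fun hxs' => hx (hsub x (by simp [RTree.resVars]) hxs'), ?_, ?_⟩
    · refine regAux_mono t0 _ _ h0 (fun y hy hy' => ?_)
      rcases Set.mem_insert_iff.mp hy' with rfl | hy'
      · exact Set.mem_insert _ _
      · exact Set.mem_insert_iff.mpr (Or.inr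
          (hsub y (by simp [RTree.resVars]; exact Or.inr (Or.inl hy)) hy'))
    · refine regAux_mono t1 _ _ h1 (fun y hy hy' => ?_)
      rcases Set.mem_insert_iff.mp hy' with rfl | hy'
      · exact Set.mem_insert _ _
      · exact Set.mem_insert_iff.mpr (Or.inr
          (hsub y (by simp [RTree.resVars]; exact Or.inr (Or.inr hy)) hy'))

lemma falsifies_of_set {α : Assign} {x : Var} {b : Bool} {C : Clause}
    (h : falsifies (α.set x b) C) (hx : (x, !b) ∉ C) : falsifies α C := by
  intro l hl
  have := h l hl
  by_cases hxl : l.1 = x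
  · rw [Assign.set, if_pos hxl] at this
    have hb : l.2 = !b := by
      have : b = !l.2 := by simpa using this
      simp [this]
    exact absurd (by rw [← hxl, ← hb]; exact hl) hx
  · rwa [Assign.set, if_neg hxl] at this

lemma not_mem_resVars {α : Assign} {x : Var} {b : Bool} {t : RTree}
    (h : ∀ y ∈ t.resVars, (α.set x b) y = none) :
    x ∉ t.resVars ∧ ∀ y ∈ t.resVars, α y = none := by
  constructor
  · intro hx
    have := h x hx
    simp [Assign.set] at this
  · intro y hy
    have := h y hy
    by_cases hxy : y = x
    · rw [Assign.set, if_pos hxy] at this; simp at this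
    · rwa [Assign.set, if_neg hxy] at this

lemma falsifies_resolvent {α : Assign} {x : Var} {C0 C1 : Clause}
    (h0 : falsifies (α.set x false) C0) (h1 : falsifies (α.set x true) C1) :
    falsifies α (Resolvent C0 C1 x) := by
  intro l hl
  rw [Resolvent, Finset.mem_union] at hl
  rcases hl with hl | hl
  · rw [Finset.mem_erase] at hl
    have := h0 l hl.2
    have hxl : l.1 ≠ x := by
      intro hxl
      rw [Assign.set, if_pos hxl] at this
      have hl2 : l.2 = true := by
        have : false = !l.2 := by simpa using this
        simp [Bool.eq_not_iff] at this; simp [this]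
      exact hl.1 (Prod.ext hxl (by simp [hl2, posLit]))
    rwa [Assign.set, if_neg hxl] at this
  · rw [Finset.mem_erase] at hl
    have := h1 l hl.2
    have hxl : l.1 ≠ x := by
      intro hxl
      rw [Assign.set, if_pos hxl] at this
      have hl2 : l.2 = false := by
        have : true = !l.2 := by simpa using this
        simp [Bool.eq_not_iff] at this; simp [this]
      exact hl.1 (Prod.ext hxl (by simp [hl2, negLit]))
    rwa [Assign.set, if_neg hxl] at this

/-- Prop. 4.1: a DLL execution on `(F, α)` returning UNSAT after `s` recursive
calls yields a clause `C` falsified by `α` with a regular resolution tree from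
`F` of size `≤ s + 1` avoiding the variables of `α`. -/
theorem stmt7 (F : CNF) (hU : Unsat F) (α : Assign) (s : ℕ)
    (h : DLLUnsat F α s) :
    ∃ (C : Clause) (t : RTree), IsResTreeFrom F t ∧ t.regular ∧ t.conc = C ∧
      falsifies α C ∧ t.size ≤ s + 1 ∧ ∀ x ∈ t.resVars, α x = none := by
  clear hU
  induction h with
  | conflict α hf =>
    obtain ⟨C, hC, hf⟩ := hf
    exact ⟨C, .leaf C, hC, trivial, rfl, hf, le_refl _, by simp [RTree.resVars]⟩
  | branch α x ε s0 s1 hnot0 hnot1 hx h0 h1 ih0 ih1 =>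
    obtain ⟨C0, t0, hF0, hreg0, hc0, hf0, hsz0, hrv0⟩ := ih0
    obtain ⟨C1, t1, hF1, hreg1, hc1, hf1, hsz1, hrv1⟩ := ih1
    by_cases hm0 : (x, !ε) ∈ C0
    · by_cases hm1 : (x, ε) ∈ C1
      · -- resolve
        have hnm0 := not_mem_resVars hrv0
        have hnm1 := not_mem_resVars hrv1
        -- orient so that the clause containing posLit x is on the left
        obtain ⟨ta, tb, hFa, hFb, hpa, hpb, hfa, hfb, hrega, hregb, hnma, hnmb, hsz⟩ :
            ∃ ta tb : RTree, IsResTreeFrom F ta ∧ IsResTreeFrom F tb ∧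
              posLit x ∈ ta.conc ∧ negLit x ∈ tb.conc ∧
              falsifies (α.set x false) ta.conc ∧ falsifies (α.set x true) tb.conc ∧
              ta.regAux ∅ ∧ tb.regAux ∅ ∧
              (x ∉ ta.resVars ∧ ∀ y ∈ ta.resVars, α y = none) ∧
              (x ∉ tb.resVars ∧ ∀ y ∈ tb.resVars, α y = none) ∧
              ta.size + tb.size = t0.size + t1.size := by
          cases ε with
          | false =>
            refine ⟨t0, t1, hF0, hF1, ?_, ?_, ?_, ?_, hreg0, hreg1, hnm0, hnm1, by omega⟩
            · rw [hc0]; exact hm0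
            · rw [hc1]; exact hm1
            · rw [hc0]; exact hf0
            · rw [hc1]; exact hf1
          | true =>
            refine ⟨t1, t0, hF1, hF0, ?_, ?_, ?_, ?_, hreg1, hreg0, hnm1, hnm0, by omega⟩
            · rw [hc1]; exact hm1
            · rw [hc0]; exact hm0
            · rw [hc1]; exact hf1
            · rw [hc0]; exact hf0
        obtain ⟨hxa, hαa⟩ := hnma
        obtain ⟨hxb, hαb⟩ := hnmb
        refine ⟨Resolvent ta.conc tb.conc x,
          .node (Resolvent ta.conc tb.conc x) x ta tb,
          ⟨hFa, hFb, hpa, hpb, rfl⟩, ?_, rfl, falsifies_resolvent hfa hfb, ?_, ?_⟩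
        · refine ⟨by simp, ?_, ?_⟩
          · refine regAux_mono ta _ _ hrega (fun y hy hy' => ?_)
            rcases Set.mem_insert_iff.mp hy' with rfl | hy'
            · exact absurd hy hxa
            · exact hy'
          · refine regAux_mono tb _ _ hregb (fun y hy hy' => ?_)
            rcases Set.mem_insert_iff.mp hy' with rfl | hy'
            · exact absurd hy hxb
            · exact hy'
        · simp only [RTree.size]
          omega

        · intro y hy
          simp only [RTree.resVars] at hy
          rcases Finset.mem_insert.mp hy with rfl | hy
          · exact hx
          · rcases Finset.mem_union.mp hy with hy | hy
            · exact hαa y hy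
            · exact hαb y hy
      · -- t1's conclusion is already falsified by α
        have hf1' : falsifies α C1 := by
          refine falsifies_of_set hf1 ?_
          simpa using hm1
        exact ⟨C1, t1, hF1, hreg1, hc1, hf1', by omega,
          fun y hy => (not_mem_resVars hrv1).2 y hy⟩
    · -- t0's conclusion is already falsified by α
      have hf0' : falsifies α C0 := falsifies_of_set hf0 hm0
      exact ⟨C0, t0, hF0, hreg0, hc0, hf0', by omega,
        fun y hy => (not_mem_resVars hrv0).2 y hy⟩
end
end

section
/- Let C be a clause of size k ≤ n/2 over the variables x_{i,j} (1 ≤ i ≤ n+1, 1 ≤ j ≤ n) of the functional pigeonhole principle, such that C is not tautological, C contains no hole clause {¬x_{i,j}, ¬x_{i',j}} (i ≠ i') as a subset, and C contains no functional clause {¬x_{i,j}, ¬x_{i,j'}} (j ≠ j') as a subset. Then there is a matching ρ ⊆ {1,…,n+1} × {1,…,n} of size at most k whose induced partial assignment falsifies every literal of C. -/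
/-- Lem. 8.4: a non-tautological clause `C` of size `k ≤ n/2` over the
pigeonhole variables `x_{i,j}` (literals are pairs `((i,j), b)`), containing no
hole clause and no functional clause as a subset, is falsified by the partial
assignment induced by some matching `ρ` of size `≤ k`. -/
theorem stmt17 (n : ℕ) (C : Finset ((ℕ × ℕ) × Bool)) (k : ℕ)
    (hk : C.card = k) (hkn : 2 * k ≤ n)
    (hvars : ∀ l ∈ C, 1 ≤ l.1.1 ∧ l.1.1 ≤ n + 1 ∧ 1 ≤ l.1.2 ∧ l.1.2 ≤ n)
    (htaut : ¬ ∃ v, (v, true) ∈ C ∧ (v, false) ∈ C)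
    (hhole : ¬ ∃ i i' j, i ≠ i' ∧ ((i, j), false) ∈ C ∧ ((i', j), false) ∈ C)
    (hfun : ¬ ∃ i j j', j ≠ j' ∧ ((i, j), false) ∈ C ∧ ((i, j'), false) ∈ C) :
    ∃ ρ : Finset (ℕ × ℕ),
      (∀ p ∈ ρ, 1 ≤ p.1 ∧ p.1 ≤ n + 1 ∧ 1 ≤ p.2 ∧ p.2 ≤ n) ∧
      (∀ p ∈ ρ, ∀ q ∈ ρ, p.1 = q.1 → p = q) ∧
      (∀ p ∈ ρ, ∀ q ∈ ρ, p.2 = q.2 → p = q) ∧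
      ρ.card ≤ k ∧
      (∀ l ∈ C, if l.2
        then ∃ p ∈ ρ, (p.1 = l.1.1 ∧ p.2 ≠ l.1.2) ∨ (p.2 = l.1.2 ∧ p.1 ≠ l.1.1)
        else l.1 ∈ ρ) := by
  classical
  set N : Finset (ℕ × ℕ) := (C.filter (fun l => l.2 = false)).image Prod.fst with hNdef
  have hmemN : ∀ p : ℕ × ℕ, p ∈ N ↔ (p, false) ∈ C := by
    intro p
    constructor
    · intro hp
      rw [hNdef, Finset.mem_image] at hp
      obtain ⟨l, hl, rfl⟩ := hp
      rw [Finset.mem_filter] at hl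
      obtain ⟨hl1, hl2⟩ := hl
      have : l = (l.1, false) := by
        cases l; simp_all
      rwa [← this]
    · intro hp
      rw [hNdef, Finset.mem_image]
      exact ⟨(p, false), Finset.mem_filter.2 ⟨hp, rfl⟩, rfl⟩
  set Prows : Finset ℕ := (C.filter (fun l => l.2 = true)).image (fun l => l.1.1) with hPdef
  set R : Finset ℕ := Prows \ (N.image Prod.fst) with hRdef
  set Cols : Finset ℕ := C.image (fun l => l.1.2) with hColsdef
  set Avail : Finset ℕ := (Finset.Icc 1 n) \ Cols with hAdef
  -- cardinality facts
  have hNcard : N.card ≤ (C.filter (fun l => l.2 = false)).card := Finset.card_image_le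
  have hRcard : R.card ≤ (C.filter (fun l => l.2 = true)).card := by
    calc R.card ≤ Prows.card := Finset.card_le_card (Finset.sdiff_subset)
    _ ≤ _ := Finset.card_image_le
  have hsum : (C.filter (fun l => l.2 = true)).card + (C.filter (fun l => l.2 = false)).card = k := by
    rw [← hk]
    have := Finset.card_filter_add_card_filter_not (s := C) (p := fun l => l.2 = true)
    simpa using this
  have hRN : R.card + N.card ≤ k := by omega
  have hColsCard : Cols.card ≤ k := by
    rw [← hk]; exact Finset.card_image_le
  have hAvail : R.card ≤ Avail.card := by
    have h1 : (Finset.Icc 1 n).card - Cols.card ≤ Avail.card := Finset.le_card_sdiff _ _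
    have h2 : (Finset.Icc 1 n).card = n := by simp
    omega
  obtain ⟨S, hSsub, hScard⟩ := Finset.exists_subset_card_eq hAvail
  have e := Finset.equivOfCardEq hScard.symm
  set F : {x // x ∈ R} → ℕ × ℕ := fun i => ((i : ℕ), ((e i : ℕ))) with hFdef
  set ρ : Finset (ℕ × ℕ) := N ∪ R.attach.image F with hρdef
  have hSavail : ∀ i : {x // x ∈ R}, (e i : ℕ) ∈ Avail := fun i => hSsub (e i).2
  have hRmem : ∀ i ∈ R, ∃ j, ((i, j), true) ∈ C := by
    intro i hi
    rw [hRdef, Finset.mem_sdiff, hPdef, Finset.mem_image] at hi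
    obtain ⟨⟨l, hl, hli⟩, _⟩ := hi
    rw [Finset.mem_filter] at hl
    refine ⟨l.1.2, ?_⟩
    have : l = ((i, l.1.2), true) := by
      obtain ⟨⟨a,b⟩,c⟩ := l; simp_all
    rw [this] at hl
    exact hl.1
  have hRnotN : ∀ i ∈ R, ∀ p ∈ N, p.1 ≠ i := by
    intro i hi p hp h
    rw [hRdef, Finset.mem_sdiff] at hi
    exact hi.2 (Finset.mem_image.2 ⟨p, hp, h⟩)
  have hNcols : ∀ p ∈ N, p.2 ∈ Cols := by
    intro p hp
    exact Finset.mem_image.2 ⟨(p, false), (hmemN p).1 hp, rfl⟩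
  have hAddedCols : ∀ i : {x // x ∈ R}, (e i : ℕ) ∉ Cols ∧ 1 ≤ (e i : ℕ) ∧ (e i : ℕ) ≤ n := by
    intro i
    have := hSavail i
    rw [hAdef, Finset.mem_sdiff, Finset.mem_Icc] at this
    exact ⟨this.2, this.1.1, this.1.2⟩
  -- membership characterization of ρ
  have hmemρ : ∀ q : ℕ × ℕ, q ∈ ρ ↔ q ∈ N ∨ ∃ i : {x // x ∈ R}, F i = q := by
    intro q
    rw [hρdef, Finset.mem_union]
    constructor
    · rintro (h | h)
      · exact Or.inl h
      · obtain ⟨i, _, hi⟩ := Finset.mem_image.1 h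
        exact Or.inr ⟨i, hi⟩
    · rintro (h | ⟨i, hi⟩)
      · exact Or.inl h
      · exact Or.inr (Finset.mem_image.2 ⟨i, Finset.mem_attach _ _, hi⟩)
  refine ⟨ρ, ?_, ?_, ?_, ?_, ?_⟩
  · -- bounds
    intro p hp
    rcases (hmemρ p).1 hp with h | ⟨i, rfl⟩
    · have := hvars (p, false) ((hmemN p).1 h)
      simpa using this
    · obtain ⟨j, hj⟩ := hRmem i.1 i.2
      have h1 := hvars _ hj
      have h2 := hAddedCols i
      simp only [hFdef] at *
      exact ⟨h1.1, h1.2.1, h2.2.1, h2.2.2⟩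
  · -- rows injective
    intro p hp q hq hpq
    rcases (hmemρ p).1 hp with h1 | ⟨i, rfl⟩ <;> rcases (hmemρ q).1 hq with h2 | ⟨i', rfl⟩
    · -- both in N
      by_contra hne
      have hc1 := (hmemN p).1 h1
      have hc2 := (hmemN q).1 h2
      apply hfun
      refine ⟨p.1, p.2, q.2, ?_, by simpa using hc1, by rw [hpq]; simpa using hc2⟩
      intro h; apply hne; exact Prod.ext hpq h
    · simp only [hFdef] at hpq
      exact absurd hpq (hRnotN i'.1 i'.2 p h1)
    · simp only [hFdef] at hpq
      exact absurd hpq.symm (hRnotN i.1 i.2 q h2)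
    · have : i = i' := Subtype.ext (by simpa [hFdef] using hpq)
      rw [this]
  · -- columns injective
    intro p hp q hq hpq
    rcases (hmemρ p).1 hp with h1 | ⟨i, rfl⟩ <;> rcases (hmemρ q).1 hq with h2 | ⟨i', rfl⟩
    · by_contra hne
      have hc1 := (hmemN p).1 h1
      have hc2 := (hmemN q).1 h2
      apply hhole
      refine ⟨p.1, q.1, p.2, ?_, by simpa using hc1, by rw [hpq]; simpa using hc2⟩
      intro h; apply hne; exact Prod.ext h hpq
    · simp only [hFdef] at hpq
      exact absurd (hpq ▸ hNcols p h1) (hAddedCols i').1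
    · simp only [hFdef] at hpq
      exact absurd (hpq ▸ hNcols q h2) (hAddedCols i).1
    · have : e i = e i' := Subtype.ext (by simpa [hFdef] using hpq)
      have : i = i' := e.injective this
      rw [this]
  · -- card
    have h1 : ρ.card ≤ N.card + (R.attach.image F).card := by
      rw [hρdef]; exact Finset.card_union_le _ _
    have h2 : (R.attach.image F).card ≤ R.card := by
      calc (R.attach.image F).card ≤ R.attach.card := Finset.card_image_le
      _ = R.card := Finset.card_attach
    omega
  · -- falsification
    intro l hl
    obtain ⟨⟨i, j⟩, b⟩ := l
    cases b
    · simp only [if_neg Bool.false_ne_true, Bool.false_eq_true, if_false]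
      exact (hmemρ (i, j)).2 (Or.inl ((hmemN (i, j)).2 hl))
    · simp only [if_true]
      by_cases hrow : ∃ p ∈ N, p.1 = i
      · obtain ⟨p, hp, hpi⟩ := hrow
        refine ⟨p, (hmemρ p).2 (Or.inl hp), Or.inl ⟨hpi, ?_⟩⟩
        intro hpj
        apply htaut
        refine ⟨(i, j), hl, ?_⟩
        have : p = (i, j) := Prod.ext hpi hpj
        rw [← this]
        exact (hmemN p).1 hp
      · have hiR : i ∈ R := by
          rw [hRdef, Finset.mem_sdiff]
          constructor
          · exact Finset.mem_image.2 ⟨((i, j), true), Finset.mem_filter.2 ⟨hl, rfl⟩, rfl⟩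
          · intro h
            obtain ⟨p, hp, hpi⟩ := Finset.mem_image.1 h
            exact hrow ⟨p, hp, hpi⟩
        refine ⟨F ⟨i, hiR⟩, (hmemρ _).2 (Or.inr ⟨⟨i, hiR⟩, rfl⟩), Or.inl ⟨rfl, ?_⟩⟩
        intro hcol
        apply (hAddedCols ⟨i, hiR⟩).1
        simp only [hFdef] at hcol
        rw [hcol]
        exact Finset.mem_image.2 ⟨((i, j), true), hl, rfl⟩
end

section
/- If a CNF F has an RTLW(k) refutation of size s, then F has an RTLW(k) refutation of size at most 2s in which no leaf used as a lemma is labeled by a clause containing some clause of F as a subset. -/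
open Classical

noncomputable section

noncomputable def fixTree (F : CNF) : WTree → WTree
  | .leaf C => if h : C ∉ F ∧ ∃ D ∈ F, D ⊆ C then .weak C (.leaf h.2.choose) else .leaf C
  | .res C x t0 t1 => .res C x (fixTree F t0) (fixTree F t1)
  | .weak C t => .weak C (fixTree F t)

lemma fixTree_conc (F : CNF) (t : WTree) : (fixTree F t).conc = t.conc := by
  cases t with
  | leaf C => simp only [fixTree]; split <;> rfl
  | res C x t0 t1 => rfl
  | weak C t => rfl

lemma fixTree_size (F : CNF) (t : WTree) : (fixTree F t).size ≤ 2 * t.size := by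
  induction t with
  | leaf C => simp only [fixTree]; split <;> simp [WTree.size] <;> omega
  | res C x t0 t1 ih0 ih1 => simp only [fixTree, WTree.size]; omega
  | weak C t ih => simp only [fixTree, WTree.size]; omega

lemma fixTree_allClauses (F : CNF) (t : WTree) :
    t.allClauses ⊆ (fixTree F t).allClauses := by
  induction t with
  | leaf C =>
    simp only [fixTree]; split
    · intro D hD; simp [WTree.allClauses] at hD ⊢; tauto
    · exact le_refl _
  | res C x t0 t1 ih0 ih1 =>
    simp only [fixTree, WTree.allClauses]
    exact Set.union_subset_union (Set.union_subset_union le_rfl ih0) ih1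
  | weak C t ih =>
    simp only [fixTree, WTree.allClauses]
    exact Set.union_subset_union le_rfl ih

lemma IsRTLW_mono (F : CNF) (k : ℕ) (t : WTree) :
    ∀ a b : Set Clause, a ⊆ b → IsRTLW F k t a → IsRTLW F k t b := by
  induction t with
  | leaf C =>
    intro a b hab h
    rcases h with h | ⟨h1, h2⟩
    · exact Or.inl h
    · exact Or.inr ⟨hab h1, h2⟩
  | res C x t0 t1 ih0 ih1 =>
    intro a b hab h
    exact ⟨ih0 a b hab h.1, ih1 _ _ (Set.union_subset_union hab le_rfl) h.2.1,
      h.2.2.1, h.2.2.2.1, h.2.2.2.2⟩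
  | weak C t ih =>
    intro a b hab h
    exact ⟨ih a b hab h.1, h.2⟩

lemma fixTree_valid (F : CNF) (k : ℕ) (t : WTree) :
    ∀ a : Set Clause, IsRTLW F k t a → IsRTLW F k (fixTree F t) a := by
  induction t with
  | leaf C =>
    intro a h
    simp only [fixTree]
    split
    · next hc =>
      refine ⟨Or.inl hc.2.choose_spec.1, ?_⟩
      show hc.2.choose ⊆ C
      exact hc.2.choose_spec.2
    · exact h
  | res C x t0 t1 ih0 ih1 =>
    refine fun a h => ⟨ih0 a h.1, ?_, ?_, ?_, ?_⟩
    · exact IsRTLW_mono F k _ _ _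
        (Set.union_subset_union le_rfl (fixTree_allClauses F t0)) (ih1 _ h.2.1)
    · rw [fixTree_conc]; exact h.2.2.1
    · rw [fixTree_conc]; exact h.2.2.2.1
    · rw [fixTree_conc, fixTree_conc]; exact h.2.2.2.2
  | weak C t ih =>
    intro a h
    exact ⟨ih a h.1, by rw [fixTree_conc]; exact h.2⟩

lemma fixTree_leaves (F : CNF) (t : WTree) :
    ∀ C ∈ (fixTree F t).leafClauses, C ∉ F → ¬ ∃ D ∈ F, D ⊆ C := by
  induction t with
  | leaf C =>
    intro E hE hEF
    simp only [fixTree] at hE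
    split at hE
    · next hc =>
      simp only [WTree.leafClauses, Set.mem_singleton_iff] at hE
      subst hE
      exact absurd hc.2.choose_spec.1 hEF
    · simp only [WTree.leafClauses, Set.mem_singleton_iff] at hE
      subst hE
      next hc =>
        push_neg at hc
        exact fun ⟨D, hD1, hD2⟩ => hc hEF D hD1 hD2
  | res C x t0 t1 ih0 ih1 =>
    intro E hE
    rcases hE with h | h
    · exact ih0 E h
    · exact ih1 E h
  | weak C t ih => exact ih

/-- Lem. 8.2: an RTLW(k) refutation of size `s` can be converted to one of size
`≤ 2s` in which no lemma is subsumed by a clause of `F`. -/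
theorem stmt18 (F : CNF) (k : ℕ) (t : WTree) (s : ℕ)
    (ht : IsRTLW F k t ∅) (hc : t.conc = ∅) (hs : t.size = s) :
    ∃ t' : WTree, IsRTLW F k t' ∅ ∧ t'.conc = ∅ ∧ t'.size ≤ 2 * s ∧
      ∀ C ∈ t'.leafClauses, C ∉ F → ¬ ∃ D ∈ F, D ⊆ C := by
  refine ⟨fixTree F t, fixTree_valid F k t ∅ ht, by rw [fixTree_conc]; exact hc,
    by rw [← hs]; exact fixTree_size F t, fixTree_leaves F t⟩
end
end
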